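/- For every positive integer n ≥ 1, every prime p not dividing n, and every r ∈ ℕ with p^r ≥ 5, there exists a monic irreducible symplectic polynomial of degree 2n over F_{p^r} whose coefficient of x^{2n-1} is nonzero. -/

import Mathlib

open Polynomial Finset

-- multiples of a fixed exponent stay fixed
lemma pow_pow_fixed {L : Type*} [Monoid L] {α : L} {q d : ℕ} (h : α ^ q ^ d = α) :
    ∀ s, α ^ q ^ (d * s) = α := by
  intro s
  induction s with
  | zero => simp
  | succ s ih =>
      rw [Nat.mul_succ, pow_add, pow_mul, ih, h]

lemma gcd_pow_fixed {L : Type*} [Monoid L] {q : ℕ}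
    (hinj : ∀ t : ℕ, Function.Injective fun x : L => x ^ q ^ t) :
    ∀ a, 0 < a → ∀ b (α : L), α ^ q ^ a = α → α ^ q ^ b = α → α ^ q ^ Nat.gcd a b = α := by
  intro a
  induction a using Nat.strong_induction_on with
  | _ a IH =>
    intro ha b α hfa hfb
    rw [Nat.gcd_rec a b]
    rcases Nat.eq_zero_or_pos (b % a) with h0 | hpos
    · rw [h0, Nat.gcd_zero_left]; exact hfa
    · have hmodlt : b % a < a := Nat.mod_lt _ ha
      have ht : α ^ q ^ (a * (b / a)) = α := pow_pow_fixed hfa (b / a)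
      have key : α ^ q ^ (b % a) = α := by
        apply hinj (a * (b / a))
        show (α ^ q ^ (b % a)) ^ q ^ (a * (b / a)) = α ^ q ^ (a * (b / a))
        rw [ht, ← pow_mul, ← pow_add, Nat.mod_add_div, hfb]
      exact IH (b % a) hmodlt hpos a α key hfa

-- every q-power fixed point lies in the image of the base field
lemma fixed_mem_range {K L : Type*} [Field K] [Fintype K] [Field L] [DecidableEq L]
    (A : K →+* L) (x : L) (hx : x ^ Fintype.card K = x) : ∃ a : K, A a = x := by
  classical
  set q := Fintype.card K with hq
  have hq2 : 2 ≤ q := Fintype.one_lt_card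
  set P : L[X] := X ^ q - X with hP
  have hPne : P ≠ 0 := by
    intro h
    have : P.coeff q = 0 := by rw [h]; simp
    rw [hP] at this
    simp only [coeff_sub, coeff_X_pow, coeff_X, if_pos rfl,
      if_neg (by omega : ¬ (1:ℕ) = q)] at this
    simp at this
  have hPdeg : P.natDegree ≤ q := by
    refine le_trans (natDegree_sub_le _ _) ?_
    simp only [natDegree_X_pow, natDegree_X, max_le_iff]
    omega
  have hroot : ∀ y : L, y ^ q = y → y ∈ P.roots.toFinset := by
    intro y hy
    rw [Multiset.mem_toFinset, mem_roots hPne]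
    simp [hP, IsRoot, hy]
  by_contra hcon
  push_neg at hcon
  have hximg : x ∉ (Finset.univ.image A) := by
    simp only [Finset.mem_image, Finset.mem_univ, true_and]
    rintro ⟨a, ha⟩; exact hcon a ha
  have hsub : insert x (Finset.univ.image A) ⊆ P.roots.toFinset := by
    intro y hy
    rcases Finset.mem_insert.mp hy with rfl | hy
    · exact hroot y hx
    · obtain ⟨a, -, rfl⟩ := Finset.mem_image.mp hy
      apply hroot
      rw [← map_pow, FiniteField.pow_card]
  have hcard : q + 1 ≤ P.roots.toFinset.card := by
    have h1 : (insert x (Finset.univ.image A)).card = q + 1 := by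
      rw [Finset.card_insert_of_notMem hximg,
        Finset.card_image_of_injective _ A.injective, Finset.card_univ]
    rw [← h1]
    exact Finset.card_le_card hsub
  have : P.roots.toFinset.card ≤ q :=
    le_trans (Multiset.toFinset_card_le _) (le_trans (P.card_roots') hPdeg)
  omega

lemma nat_geom_le {q : ℕ} (hq : 2 ≤ q) : ∀ h : ℕ, ∑ i ∈ range (h + 1), q ^ i ≤ 2 * q ^ h := by
  intro h
  induction h with
  | zero => simp
  | succ h ih =>
      rw [Finset.sum_range_succ]
      have h1 : 2 * q ^ h ≤ q ^ (h + 1) := by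
        rw [pow_succ, Nat.mul_comm]
        exact Nat.mul_le_mul_left _ hq
      have := Nat.pow_le_pow_right (by omega : 1 ≤ q) (Nat.le_succ h)
      omega

lemma five_pow_ge {n : ℕ} (hn : 2 ≤ n) : n + 2 ≤ 5 ^ (n - 1) := by
  induction n with
  | zero => omega
  | succ n ih =>
      rcases Nat.lt_or_ge n 2 with h | h
      · interval_cases n <;> simp_all
      · have := ih h
        have h2 : 5 ^ (n - 1) * 5 = 5 ^ (n + 1 - 1) := by
          rw [← pow_succ]
          congr 1
          omega
        omega

lemma arith_bound {q n : ℕ} (hq : 5 ≤ q) (hn : 1 ≤ n) :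
    2 * q ^ (n - 1) + (2 + ∑ m ∈ n.properDivisors, (q ^ m + 1)) < q ^ n + 1 := by
  rcases Nat.eq_or_lt_of_le hn with h1 | h2
  · have : n = 1 := h1.symm
    subst this
    simp [Nat.properDivisors]
    omega
  · have hn2 : 2 ≤ n := h2
    have hsub : n.properDivisors ⊆ Finset.range (n / 2 + 1) := by
      intro m hm
      rw [Nat.mem_properDivisors] at hm
      rw [Finset.mem_range]
      have h2m : 2 * m ≤ n := by
        obtain ⟨k, hk⟩ := hm.1
        have hk2 : 2 ≤ k := by
          rcases Nat.lt_or_ge k 2 with hk' | hk'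
          · interval_cases k <;> omega
          · exact hk'
        calc 2 * m ≤ m * k := by rw [Nat.mul_comm]; exact Nat.mul_le_mul_left m hk2
        _ = n := hk.symm
      omega
    have hS : ∑ m ∈ n.properDivisors, (q ^ m + 1) ≤ 2 * q ^ (n / 2) + n := by
      have h1 : ∑ m ∈ n.properDivisors, (q ^ m + 1)
          = (∑ m ∈ n.properDivisors, q ^ m) + n.properDivisors.card := by
        rw [Finset.sum_add_distrib, Finset.sum_const, smul_eq_mul, mul_one]
      have h2 : ∑ m ∈ n.properDivisors, q ^ m ≤ ∑ m ∈ Finset.range (n / 2 + 1), q ^ m :=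
        Finset.sum_le_sum_of_subset hsub
      have h3 := nat_geom_le (by omega : 2 ≤ q) (n / 2)
      have h4 : n.properDivisors.card ≤ n := by
        refine le_trans (Finset.card_le_card fun m hm => ?_) (by simp : (Finset.range n).card ≤ n)
        rw [Nat.mem_properDivisors] at hm
        exact Finset.mem_range.mpr hm.2
      omega
    have hhalf : q ^ (n / 2) ≤ q ^ (n - 1) :=
      Nat.pow_le_pow_right (by omega) (by omega)
    have hlast : n + 2 ≤ q ^ (n - 1) :=
      le_trans (five_pow_ge hn2) (Nat.pow_le_pow_left hq _)
    have hfin : q ^ n = q * q ^ (n - 1) := by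
      conv_lhs => rw [show n = (n-1) + 1 by omega]
      rw [pow_succ, Nat.mul_comm]
    have h5 : 5 * q ^ (n-1) ≤ q * q ^ (n-1) := Nat.mul_le_mul_right _ hq
    omega

lemma sum_range_two_mul {M : Type*} [AddCommMonoid M] (n : ℕ) (g : ℕ → M) :
    ∑ i ∈ range (2 * n), g i = ∑ i ∈ range n, g i + ∑ i ∈ range n, g (n + i) := by
  rw [two_mul, Finset.range_eq_Ico,
    ← Finset.sum_Ico_consecutive g (Nat.zero_le n) (by omega : n ≤ n + n),
    Finset.sum_Ico_eq_sum_range, Finset.sum_Ico_eq_sum_range]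
  simp only [Nat.sub_zero, Nat.zero_add, Nat.add_sub_cancel]

lemma reverse_prod_eq {R : Type*} [CommRing R] [NoZeroDivisors R] {ι : Type*} (s : Finset ι)
    (f : ι → R[X]) : (∏ i ∈ s, f i).reverse = ∏ i ∈ s, (f i).reverse := by
  induction s using Finset.cons_induction with
  | empty =>
      simp only [Finset.prod_empty]
      simpa using reverse_C (1 : R)
  | cons a s ha ih => rw [Finset.prod_cons, Finset.prod_cons, reverse_mul_of_domain, ih]

lemma reverse_X_sub_C' {R : Type*} [CommRing R] [Nontrivial R] (c : R) :
    (X - C c).reverse = 1 - C c * X := by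
  rw [Polynomial.reverse, natDegree_X_sub_C]
  have h : (X - C c : R[X]) = C 1 * X ^ 1 - C c * X ^ 0 := by simp
  rw [h, reflect_sub, reflect_C_mul_X_pow, reflect_C_mul_X_pow]
  simp [revAt_le]

/-- For `n ≥ 1`, a prime `p ∤ n`, and `p^r ≥ 5`, there is a monic irreducible symplectic
polynomial of degree `2n` over the field with `p^r` elements whose coefficient of
`x^(2n-1)` is nonzero. -/
theorem stmt9 {K : Type} [Field K] [Fintype K] {p r n : ℕ} (hp : p.Prime) [CharP K p]
    (hcard : Fintype.card K = p ^ r) (hn : 1 ≤ n) (hpn : ¬ p ∣ n) (h5 : 5 ≤ p ^ r) :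
    ∃ f : K[X], f.Monic ∧ Irreducible f ∧ f.natDegree = 2 * n ∧
      (∀ i, 1 ≤ i → i ≤ n → f.coeff i = f.coeff (2 * n - i)) ∧ f.coeff 0 = 1 ∧
      f.coeff (2 * n - 1) ≠ 0 := by
  classical
  haveI := Fact.mk hp
  set q : ℕ := p ^ r with hqdef
  have hq5 : 5 ≤ q := h5
  have hq2 : 2 ≤ q := by omega
  have hr : 1 ≤ r := by
    by_contra h
    have h0 : r = 0 := by omega
    rw [h0, pow_zero] at hqdef
    omega
  have hqn1 : 1 ≤ q ^ n := Nat.one_le_pow _ _ (by omega)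
  set m : ℕ := q ^ n + 1 with hmdef
  set N : ℕ := 2 * n with hN
  have hNpos : 0 < N := by omega
  set PK : K[X] := X ^ m - C 1 with hPK
  set L := PK.SplittingField with hL
  haveI : CharP L p := charP_of_injective_algebraMap (algebraMap K L).injective p
  haveI : ExpChar L p := ExpChar.prime hp
  -- Frobenius facts
  have hψ : ∀ (i : ℕ) (x : L), iterateFrobenius L p (r * i) x = x ^ q ^ i := by
    intro i x
    rw [iterateFrobenius_def, hqdef, ← pow_mul]
  have hinj : ∀ t : ℕ, Function.Injective fun x : L => x ^ q ^ t := by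
    intro t
    have h : (fun x : L => x ^ q ^ t) = ⇑(iterateFrobenius L p (r * t)) := by
      funext x
      rw [hψ]
    rw [h]
    exact (iterateFrobenius L p (r * t)).injective
  have hfixK : ∀ a : K, a ^ q = a := by
    intro a
    rw [← hcard]
    exact FiniteField.pow_card a
  have hfixKi : ∀ (a : K) (i : ℕ), a ^ q ^ i = a := by
    intro a i
    induction i with
    | zero => simp
    | succ i ih => rw [pow_succ, pow_mul, ih, hfixK]
  -- separability and splitting
  have hmK : (m : K) ≠ 0 := by
    have hq0 : (q : K) = 0 := by
      rw [hqdef, Nat.cast_pow, CharP.cast_eq_zero K p]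
      exact zero_pow (by omega)
    have h1 : ((q ^ n + 1 : ℕ) : K) ≠ 0 := by
      push_cast
      rw [hq0, zero_pow (by omega : n ≠ 0)]
      simp
    exact h1
  have hsep : PK.Separable := separable_X_pow_sub_C (1 : K) hmK one_ne_zero
  have hsplits : Splits (PK.map (algebraMap K L)) := SplittingField.splits PK
  have hmapPK : PK.map (algebraMap K L) = X ^ m - C 1 := by
    show (X ^ m - C 1 : K[X]).map (algebraMap K L) = _
    rw [Polynomial.map_sub, Polynomial.map_pow, map_X, map_C, map_one]
  have hPKdeg : PK.natDegree = m := by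
    show (X ^ m - C 1 : K[X]).natDegree = m
    exact natDegree_X_pow_sub_C
  have hPLne : PK.map (algebraMap K L) ≠ 0 := by
    rw [hmapPK]
    exact X_pow_sub_C_ne_zero (by omega) 1
  set U : Finset L := (PK.map (algebraMap K L)).roots.toFinset with hU
  have hUcard : U.card = m := by
    rw [hU, Multiset.toFinset_card_of_nodup (nodup_roots (hsep.map (f := algebraMap K L))),
      ← hsplits.natDegree_eq_card_roots, natDegree_map]
    exact hPKdeg
  have hUmem : ∀ x ∈ U, x ^ m = 1 := by
    intro x hx
    rw [hU, Multiset.mem_toFinset, mem_roots hPLne, hmapPK] at hx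
    simpa [IsRoot, sub_eq_zero] using hx
  have hUne : ∀ x ∈ U, x ≠ 0 := by
    intro x hx h0
    have := hUmem x hx
    rw [h0, zero_pow (by omega : m ≠ 0)] at this
    exact zero_ne_one this
  have hUinv : ∀ x ∈ U, x ^ q ^ n = x⁻¹ := by
    intro x hx
    have h1 : x ^ q ^ n * x = 1 := by
      rw [← pow_succ]
      exact hUmem x hx
    exact eq_inv_of_mul_eq_one_left h1
  have hUfix : ∀ x ∈ U, x ^ q ^ N = x := by
    intro x hx
    obtain ⟨b, hb⟩ := Nat.exists_eq_add_of_le hqn1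
    have hs2 : q ^ N = m * b + 1 := by
      rw [hN, mul_comm 2 n, pow_mul, hmdef, hb]
      ring
    rw [hs2, pow_add, pow_mul, hUmem x hx, one_pow, one_mul, pow_one]
  -- bad sets
  set BadT : Finset L := U.filter (fun x => ∑ i ∈ range N, x ^ q ^ i = 0) with hBadT
  set BadD : Finset L := U.filter (fun x => ∃ d ∈ N.properDivisors, x ^ q ^ d = x) with hBadD
  have hBadTcard : BadT.card ≤ 2 * q ^ (n - 1) := by
    set P1 : L[X] := ∑ i ∈ range n, X ^ q ^ i with hP1
    have hP1coeff : P1.coeff (q ^ (n - 1)) = 1 := by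
      rw [hP1, finset_sum_coeff]
      have hco : ∀ i ∈ range n, (X ^ q ^ i : L[X]).coeff (q ^ (n - 1))
          = if i = n - 1 then 1 else 0 := by
        intro i hi
        rw [coeff_X_pow]
        by_cases h : i = n - 1
        · simp [h]
        · rw [if_neg, if_neg h]
          intro hc
          exact h (Nat.pow_right_injective hq2 hc.symm)
      rw [Finset.sum_congr rfl hco, Finset.sum_ite_eq' (range n) (n - 1)]
      rw [if_pos (Finset.mem_range.mpr (by omega))]
    have hP1ne : P1 ≠ 0 := by
      intro h
      rw [h, coeff_zero] at hP1coeff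
      exact zero_ne_one hP1coeff
    have hP1deg : P1.natDegree ≤ q ^ (n - 1) := by
      rw [hP1]
      apply natDegree_sum_le_of_forall_le
      intro i hi
      rw [natDegree_X_pow]
      exact Nat.pow_le_pow_right (by omega) (by rw [Finset.mem_range] at hi; omega)
    have hval : ∀ x ∈ BadT, x + x⁻¹ ∈ P1.roots.toFinset := by
      intro x hx
      rw [hBadT, Finset.mem_filter] at hx
      obtain ⟨hxU, htr⟩ := hx
      rw [Multiset.mem_toFinset, mem_roots hP1ne]
      show P1.eval (x + x⁻¹) = 0
      have heval : P1.eval (x + x⁻¹) = ∑ i ∈ range n, (x + x⁻¹) ^ q ^ i := by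
        rw [hP1, eval_finset_sum]
        simp
      have hadd : ∀ i : ℕ, (x + x⁻¹) ^ q ^ i = x ^ q ^ i + (x⁻¹) ^ q ^ i := by
        intro i
        have h1 := map_add (iterateFrobenius L p (r * i)) x x⁻¹
        rwa [hψ, hψ, hψ] at h1
      have hinvpow : ∀ i : ℕ, (x⁻¹ : L) ^ q ^ i = x ^ q ^ (n + i) := by
        intro i
        rw [← hUinv x hxU, ← pow_mul, ← pow_add]
      rw [heval]
      calc ∑ i ∈ range n, (x + x⁻¹) ^ q ^ i
          = ∑ i ∈ range n, (x ^ q ^ i + x ^ q ^ (n + i)) := by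
            apply Finset.sum_congr rfl
            intro i _
            rw [hadd, hinvpow]
        _ = ∑ i ∈ range n, x ^ q ^ i + ∑ i ∈ range n, x ^ q ^ (n + i) :=
            Finset.sum_add_distrib
        _ = ∑ i ∈ range N, x ^ q ^ i := by rw [hN, sum_range_two_mul]
        _ = 0 := htr
    have hfib : ∀ b ∈ BadT.image (fun x : L => x + x⁻¹),
        (BadT.filter (fun x => x + x⁻¹ = b)).card ≤ 2 := by
      intro b _
      set Q2 : L[X] := X ^ 2 - C b * X + C 1 with hQ2
      have hQ2deg : Q2.natDegree = 2 := by
        have hform : Q2 = C 1 * X ^ 2 + C (-b) * X + C 1 := by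
          rw [hQ2, C_neg, C_1]; ring
        rw [hform]
        exact natDegree_quadratic one_ne_zero
      have hQ2ne : Q2 ≠ 0 := by
        intro h
        rw [h] at hQ2deg
        simp at hQ2deg
      have hsub : BadT.filter (fun x => x + x⁻¹ = b) ⊆ Q2.roots.toFinset := by
        intro x hx
        rw [Finset.mem_filter] at hx
        obtain ⟨hxB, hxb⟩ := hx
        rw [hBadT, Finset.mem_filter] at hxB
        have hx0 : x ≠ 0 := hUne x hxB.1
        rw [Multiset.mem_toFinset, mem_roots hQ2ne]
        show Q2.eval x = 0
        rw [hQ2]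
        simp only [eval_add, eval_sub, eval_mul, eval_pow, eval_X, eval_C]
        have : (x + x⁻¹) * x = b * x := by rw [hxb]
        rw [add_mul, inv_mul_cancel₀ hx0] at this
        rw [sq]
        linear_combination this
      calc (BadT.filter (fun x => x + x⁻¹ = b)).card
          ≤ Q2.roots.toFinset.card := Finset.card_le_card hsub
        _ ≤ _ := Multiset.toFinset_card_le _
        _ ≤ Q2.natDegree := Q2.card_roots'
        _ = 2 := hQ2deg
    have h1 := Finset.card_le_mul_card_image (f := fun x : L => x + x⁻¹) BadT 2 hfib
    have h2 : (BadT.image (fun x : L => x + x⁻¹)).card ≤ q ^ (n - 1) := by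
      have himg : BadT.image (fun x : L => x + x⁻¹) ⊆ P1.roots.toFinset := by
        intro b hb
        obtain ⟨x, hx, rfl⟩ := Finset.mem_image.mp hb
        exact hval x hx
      calc (BadT.image (fun x : L => x + x⁻¹)).card
          ≤ P1.roots.toFinset.card := Finset.card_le_card himg
        _ ≤ _ := Multiset.toFinset_card_le _
        _ ≤ P1.natDegree := P1.card_roots'
        _ ≤ q ^ (n - 1) := hP1deg
    calc BadT.card ≤ 2 * (BadT.image (fun x : L => x + x⁻¹)).card := h1
      _ ≤ 2 * q ^ (n - 1) := by omega
  -- BadD bound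
  set QD : L[X] := (X ^ 2 - C 1) * ∏ m' ∈ n.properDivisors, (X ^ (q ^ m' + 1) - C 1) with hQD
  have hprodne : (∏ m' ∈ n.properDivisors, (X ^ (q ^ m' + 1) - C 1) : L[X]) ≠ 0 :=
    Finset.prod_ne_zero_iff.mpr fun m' _ => X_pow_sub_C_ne_zero (by positivity) 1
  have hQDne : QD ≠ 0 := mul_ne_zero (X_pow_sub_C_ne_zero (by norm_num) 1) hprodne
  have hQDdeg : QD.natDegree = 2 + ∑ m' ∈ n.properDivisors, (q ^ m' + 1) := by
    rw [hQD, natDegree_mul (X_pow_sub_C_ne_zero (by norm_num) 1) hprodne,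
      natDegree_X_pow_sub_C, natDegree_prod _ _
        (fun m' _ => X_pow_sub_C_ne_zero (by positivity) 1)]
    congr 1
    exact Finset.sum_congr rfl fun m' _ => natDegree_X_pow_sub_C
  have hBadDsub : BadD ⊆ QD.roots.toFinset := by
    intro x hx
    rw [hBadD, Finset.mem_filter] at hx
    obtain ⟨hxU, d, hd, hfix⟩ := hx
    rw [Nat.mem_properDivisors] at hd
    have hx0 : x ≠ 0 := hUne x hxU
    have hinvx : x ^ q ^ n = x⁻¹ := hUinv x hxU
    have hd0 : 0 < d := Nat.pos_of_dvd_of_pos hd.1 (by omega)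
    have key : x ^ 2 = 1 ∨ ∃ m' ∈ n.properDivisors, x ^ (q ^ m' + 1) = 1 := by
      have hsq : x ^ q ^ n = x → x ^ 2 = 1 := by
        intro hfixn
        have hinv2 : x⁻¹ = x := by rw [← hinvx, hfixn]
        rw [sq]
        nth_rewrite 2 [← hinv2]
        rw [mul_inv_cancel₀ hx0]
      rcases Nat.even_or_odd d with hev | hodd
      · obtain ⟨m', hm'⟩ := hev
        have hd2 : d = 2 * m' := by omega
        have hm'dvdn : m' ∣ n := by
          have hdd : 2 * m' ∣ 2 * n := by rw [← hd2, ← hN]; exact hd.1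
          exact (Nat.mul_dvd_mul_iff_left (by norm_num : 0 < 2)).mp hdd
        have hm'pos : 0 < m' := by omega
        have hm'lt : m' < n := by
          have := hd.2
          rw [hN] at this
          omega
        obtain ⟨k, hk⟩ := hm'dvdn
        rcases Nat.even_or_odd k with hkev | hkodd
        · left
          obtain ⟨k', hk'⟩ := hkev
          apply hsq
          have h := pow_pow_fixed hfix k'
          have heq : d * k' = n := by rw [hd2, hk, hk']; ring
          rwa [heq] at h
        · right
          obtain ⟨k', hk'⟩ := hkodd
          refine ⟨m', Nat.mem_properDivisors.mpr ⟨⟨k, hk⟩, hm'lt⟩, ?_⟩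
          have hfixnm : x ^ q ^ (n + m') = x := by
            have h := pow_pow_fixed hfix (k' + 1)
            have heq : d * (k' + 1) = n + m' := by rw [hd2, hk, hk']; ring
            rwa [heq] at h
          have h2 : (x ^ q ^ m')⁻¹ = x := by
            conv_rhs => rw [← hfixnm]
            rw [pow_add, pow_mul, hinvx, inv_pow]
          rw [pow_succ]
          nth_rewrite 2 [← h2]
          rw [mul_inv_cancel₀ (pow_ne_zero _ hx0)]
      · left
        apply hsq
        have hdvdn : d ∣ n := by
          have h2n : d ∣ 2 * n := by rw [← hN]; exact hd.1
          exact (Nat.Coprime.dvd_of_dvd_mul_left (hodd.coprime_two_right) h2n)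
        obtain ⟨k, hk⟩ := hdvdn
        have h := pow_pow_fixed hfix k
        rwa [← hk] at h
    rw [Multiset.mem_toFinset, mem_roots hQDne]
    show QD.eval x = 0
    rw [hQD, eval_mul]
    rcases key with h | ⟨m', hm', h⟩
    · apply mul_eq_zero_of_left
      simp [h]
    · apply mul_eq_zero_of_right
      rw [eval_prod]
      apply Finset.prod_eq_zero hm'
      simp [h]
  have hBadDcard : BadD.card ≤ 2 + ∑ m' ∈ n.properDivisors, (q ^ m' + 1) :=
    le_trans (Finset.card_le_card hBadDsub)
      (le_trans (Multiset.toFinset_card_le _) (le_trans (QD.card_roots') (le_of_eq hQDdeg)))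
  -- choose a good α
  have hbig := arith_bound hq5 hn
  have hcardlt : (BadT ∪ BadD).card < U.card := by
    have h1 : (BadT ∪ BadD).card ≤ BadT.card + BadD.card := Finset.card_union_le _ _
    rw [hUcard, hmdef]
    omega
  have hbadsub : BadT ∪ BadD ⊆ U :=
    Finset.union_subset (Finset.filter_subset _ _) (Finset.filter_subset _ _)
  obtain ⟨α, hαU, hαgood⟩ := Finset.not_subset.mp (fun hsub' =>
    absurd (Finset.card_le_card hsub') (Nat.not_le.mpr hcardlt))
  have hαtr : ∑ i ∈ range N, α ^ q ^ i ≠ 0 := fun h =>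
    hαgood (Finset.mem_union_left _ (Finset.mem_filter.mpr ⟨hαU, h⟩))
  have hαD : ∀ d ∈ N.properDivisors, α ^ q ^ d ≠ α := fun d hd h =>
    hαgood (Finset.mem_union_right _ (Finset.mem_filter.mpr ⟨hαU, ⟨d, hd, h⟩⟩))
  have hα0 : α ≠ 0 := hUne α hαU
  have hαm : α ^ m = 1 := hUmem α hαU
  have hαinv : α ^ q ^ n = α⁻¹ := hUinv α hαU
  have hαN : α ^ q ^ N = α := hUfix α hαU
  have hfixfree : ∀ d, 0 < d → d < N → α ^ q ^ d ≠ α := by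
    intro d hd0 hdN hfix
    have hg := gcd_pow_fixed hinj d hd0 N α hfix hαN
    refine hαD (Nat.gcd d N) ?_ hg
    rw [Nat.mem_properDivisors]
    exact ⟨Nat.gcd_dvd_right _ _, lt_of_le_of_lt (Nat.gcd_le_left _ hd0) hdN⟩
  have hperiod : ∀ j, α ^ q ^ j = α ^ q ^ (j % N) := by
    intro j
    induction j using Nat.strong_induction_on with
    | _ j IH =>
      rcases Nat.lt_or_ge j N with h | h
      · rw [Nat.mod_eq_of_lt h]
      · have hstep : α ^ q ^ (N + (j - N)) = α ^ q ^ (j - N) := by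
          rw [pow_add, pow_mul, hαN]
        have hj : j = N + (j - N) := by omega
        rw [hj, hstep, Nat.add_mod_left]
        exact IH (j - N) (by omega)
  have hedist : ∀ i < N, ∀ j < N, α ^ q ^ i = α ^ q ^ j → i = j := by
    have key : ∀ i j, i < j → j < N → α ^ q ^ i ≠ α ^ q ^ j := by
      intro i j hij hjN heq
      have hfix : α ^ q ^ (j - i) = α := by
        apply hinj i
        show (α ^ q ^ (j - i)) ^ q ^ i = α ^ q ^ i
        rw [← pow_mul, ← pow_add]
        rw [show j - i + i = j by omega, heq]
      exact hfixfree (j - i) (by omega) (by omega) hfix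
    intro i hi j hj heq
    rcases lt_trichotomy i j with h | h | h
    · exact absurd heq (key i j h hj)
    · exact h
    · exact absurd heq.symm (key j i h hi)
  -- the polynomial over L
  set F : L[X] := ∏ i ∈ range N, (X - C (α ^ q ^ i)) with hF
  have hFmonic : F.Monic :=
    monic_prod_of_monic _ _ fun i _ => monic_X_sub_C _
  have hFdeg : F.natDegree = N := by
    rw [hF, natDegree_prod_of_monic _ _ fun i _ => monic_X_sub_C _,
      Finset.sum_congr rfl (fun i _ => (natDegree_X_sub_C (α ^ q ^ i) : _ = (fun _ => 1) i))]
    simp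
  have hprod1 : ∏ i ∈ range N, α ^ q ^ i = 1 := by
    rw [Finset.prod_pow_eq_pow_sum]
    have hsum : ∑ i ∈ range N, q ^ i = m * ∑ i ∈ range n, q ^ i := by
      rw [hN, sum_range_two_mul]
      have h2 : ∑ i ∈ range n, q ^ (n + i) = q ^ n * ∑ i ∈ range n, q ^ i := by
        rw [Finset.mul_sum]
        exact Finset.sum_congr rfl fun i _ => pow_add q n i
      rw [h2, hmdef]
      ring
    rw [hsum, pow_mul, hαm, one_pow]
  -- Frobenius fixes F
  have hFfix : ∀ j : ℕ, F.coeff j ^ q = F.coeff j := by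
    have hψ1 : ∀ x : L, iterateFrobenius L p r x = x ^ q := by
      intro x
      have := hψ 1 x
      rwa [mul_one, pow_one] at this
    have hmap : F.map (iterateFrobenius L p r) = F := by
      rw [hF, Polynomial.map_prod]
      have hfac : ∀ i ∈ range N, (X - C (α ^ q ^ i)).map (iterateFrobenius L p r)
          = X - C (α ^ q ^ ((i + 1) % N)) := by
        intro i _
        rw [Polynomial.map_sub, map_X, map_C, hψ1, ← pow_mul, ← pow_succ, hperiod]
      rw [Finset.prod_congr rfl hfac]
      refine Finset.prod_nbij' (fun i => (i + 1) % N) (fun j => (j + (N - 1)) % N)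
        ?_ ?_ ?_ ?_ ?_
      · intro a _
        exact Finset.mem_range.mpr (Nat.mod_lt _ hNpos)
      · intro a _
        exact Finset.mem_range.mpr (Nat.mod_lt _ hNpos)
      · intro a ha
        rw [Finset.mem_range] at ha
        show ((a + 1) % N + (N - 1)) % N = a
        rw [Nat.mod_add_mod, show a + 1 + (N - 1) = a + N by omega,
          Nat.add_mod_right, Nat.mod_eq_of_lt ha]
      · intro a ha
        rw [Finset.mem_range] at ha
        show ((a + (N - 1)) % N + 1) % N = a
        rw [Nat.mod_add_mod, show a + (N - 1) + 1 = a + N by omega,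
          Nat.add_mod_right, Nat.mod_eq_of_lt ha]
      · intro a _
        rfl
    intro j
    have := congrArg (fun P : L[X] => P.coeff j) hmap
    simp only [Polynomial.coeff_map] at this
    rwa [hψ1] at this
  -- lift to K
  have hlift : F ∈ Polynomial.lifts (algebraMap K L) := by
    rw [Polynomial.lifts_iff_coeff_lifts]
    intro j
    have hfix : F.coeff j ^ Fintype.card K = F.coeff j := by
      rw [hcard]
      exact hFfix j
    obtain ⟨a, ha⟩ := fixed_mem_range (algebraMap K L) (F.coeff j) hfix
    exact ⟨a, ha⟩
  obtain ⟨f0, hf0map, hf0deg, hf0monic⟩ :=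
    Polynomial.lifts_and_natDegree_eq_and_monic hlift hFmonic
  have hcoeffmap : ∀ j, algebraMap K L (f0.coeff j) = F.coeff j := by
    intro j
    rw [← hf0map, Polynomial.coeff_map]
  have hinjA := (algebraMap K L).injective
  -- reverse symmetry
  have hFrev : F.reverse = F := by
    rw [hF, reverse_prod_eq]
    have h2 : ∀ i ∈ range N, (X - C (α ^ q ^ i)).reverse
        = (-C (α ^ q ^ i)) * (X - C (α ^ q ^ ((i + n) % N))) := by
      intro i _
      rw [reverse_X_sub_C']
      have hc : (α ^ q ^ i) ≠ 0 := pow_ne_zero _ hα0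
      have hinveq : (α ^ q ^ i)⁻¹ = α ^ q ^ ((i + n) % N) := by
        rw [← hperiod, ← inv_pow, ← hαinv, ← pow_mul, ← pow_add, Nat.add_comm n i]
      rw [← hinveq, neg_mul, mul_sub, ← C_mul, mul_inv_cancel₀ hc, C_1]
      ring
    rw [Finset.prod_congr rfl h2, Finset.prod_mul_distrib]
    have h3 : (∏ i ∈ range N, (-C (α ^ q ^ i)) : L[X]) = 1 := by
      have hneg : ∀ i ∈ range N, (-C (α ^ q ^ i) : L[X]) = (-1 : L[X]) * C (α ^ q ^ i) := by
        intro i _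
        ring
      rw [Finset.prod_congr rfl hneg, Finset.prod_mul_distrib, Finset.prod_const,
        ← map_prod, hprod1, map_one, mul_one, Finset.card_range, hN, pow_mul]
      norm_num
    rw [h3, one_mul]
    refine Finset.prod_nbij' (fun i => (i + n) % N) (fun j => (j + n) % N)
      ?_ ?_ ?_ ?_ ?_
    · intro a _
      exact Finset.mem_range.mpr (Nat.mod_lt _ hNpos)
    · intro a _
      exact Finset.mem_range.mpr (Nat.mod_lt _ hNpos)
    · intro a ha
      rw [Finset.mem_range] at ha
      show ((a + n) % N + n) % N = a
      rw [Nat.mod_add_mod, show a + n + n = a + N by omega,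
        Nat.add_mod_right, Nat.mod_eq_of_lt ha]
    · intro a ha
      rw [Finset.mem_range] at ha
      show ((a + n) % N + n) % N = a
      rw [Nat.mod_add_mod, show a + n + n = a + N by omega,
        Nat.add_mod_right, Nat.mod_eq_of_lt ha]
    · intro a _
      rfl
  have hsym : ∀ i, i ≤ N → F.coeff i = F.coeff (N - i) := by
    intro i hi
    conv_lhs => rw [← hFrev]
    rw [Polynomial.coeff_reverse, hFdeg, revAt_le hi]
  -- constant coefficient
  have hF0 : F.coeff 0 = 1 := by
    rw [Polynomial.coeff_zero_eq_eval_zero, hF, eval_prod]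
    have heval0 : ∀ i ∈ range N, ((X - C (α ^ q ^ i)).eval 0 : L)
        = (-1 : L) * (α ^ q ^ i) := by
      intro i _
      simp [neg_one_mul]
    rw [Finset.prod_congr rfl heval0, Finset.prod_mul_distrib, Finset.prod_const, hprod1,
      mul_one, Finset.card_range, hN, pow_mul]
    norm_num
  -- next coefficient
  have hFnext : F.coeff (N - 1) = -∑ i ∈ range N, α ^ q ^ i := by
    have h := prod_X_sub_C_nextCoeff (s := range N) (f := fun i => α ^ q ^ i)
    rw [← hF] at h
    rw [← h, nextCoeff_of_natDegree_pos (by rw [hFdeg]; omega), hFdeg]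
  -- irreducibility
  have hint : IsIntegral K α := IsIntegral.of_finite K α
  have haeval : Polynomial.aeval α f0 = 0 := by
    rw [Polynomial.aeval_def, ← Polynomial.eval_map, hf0map, hF, eval_prod]
    refine Finset.prod_eq_zero (Finset.mem_range.mpr hNpos) ?_
    simp
  have hdvd : minpoly K α ∣ f0 := minpoly.dvd K α haeval
  have hgne : minpoly K α ≠ 0 := minpoly.ne_zero hint
  have hroots : ∀ i : ℕ, Polynomial.aeval (α ^ q ^ i) (minpoly K α) = 0 := by
    intro i
    have hcomm : ∀ a : K, (iterateFrobenius L p (r * i)) (algebraMap K L a)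
        = algebraMap K L a := by
      intro a
      rw [hψ, ← map_pow, hfixKi]
    let Φ : L →ₐ[K] L := { (iterateFrobenius L p (r * i)) with commutes' := hcomm }
    have h1 := Polynomial.aeval_algHom_apply Φ α (minpoly K α)
    rw [minpoly.aeval, map_zero] at h1
    have hΦα : Φ α = α ^ q ^ i := hψ i α
    rwa [hΦα] at h1
  have hdegge : N ≤ (minpoly K α).natDegree := by
    set gL := (minpoly K α).map (algebraMap K L) with hgL
    have hgLne : gL ≠ 0 := Polynomial.map_ne_zero hgne
    have himg : (range N).image (fun i => α ^ q ^ i) ⊆ gL.roots.toFinset := by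
      intro x hx
      obtain ⟨i, hi, rfl⟩ := Finset.mem_image.mp hx
      rw [Multiset.mem_toFinset, mem_roots hgLne]
      show gL.eval _ = 0
      rw [hgL, Polynomial.eval_map, ← Polynomial.aeval_def]
      exact hroots i
    have hcardimg : ((range N).image (fun i => α ^ q ^ i)).card = N := by
      rw [Finset.card_image_of_injOn, Finset.card_range]
      intro i hi j hj
      exact hedist i (Finset.mem_range.mp hi) j (Finset.mem_range.mp hj)
    have h1 : N ≤ gL.roots.toFinset.card := by
      rw [← hcardimg]
      exact Finset.card_le_card himg
    have h2 : gL.natDegree = (minpoly K α).natDegree := by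
      rw [hgL, natDegree_map]
    have h3 := le_trans h1 (le_trans (Multiset.toFinset_card_le _) gL.card_roots')
    omega
  have hf0ne : f0 ≠ 0 := hf0monic.ne_zero
  have hdegle : (minpoly K α).natDegree ≤ N := by
    have h := Polynomial.natDegree_le_of_dvd hdvd hf0ne
    rw [hf0deg, hFdeg] at h
    exact h
  obtain ⟨c, hc⟩ := hdvd
  have hcne : c ≠ 0 := by
    rintro rfl
    rw [mul_zero] at hc
    exact hf0ne hc
  have hcdeg : c.natDegree = 0 := by
    have hmul := Polynomial.natDegree_mul hgne hcne
    rw [← hc, hf0deg, hFdeg] at hmul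
    omega
  have hclead : (minpoly K α).leadingCoeff * c.leadingCoeff = 1 := by
    rw [← leadingCoeff_mul, ← hc]
    exact hf0monic
  rw [(minpoly.monic hint).leadingCoeff, one_mul] at hclead
  have hc1 : c = 1 := by
    have hceq := Polynomial.eq_C_of_natDegree_le_zero (le_of_eq hcdeg)
    rw [Polynomial.leadingCoeff, hcdeg] at hclead
    rw [hceq, hclead, C_1]
  have hf0eq : f0 = minpoly K α := by rw [hc, hc1, mul_one]
  have hirr : Irreducible f0 := hf0eq ▸ minpoly.irreducible hint
  -- final assembly
  refine ⟨f0, hf0monic, hirr, ?_, ?_, ?_, ?_⟩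
  · rw [hf0deg, hFdeg]
  · intro i hi1 hin
    apply hinjA
    rw [hcoeffmap, hcoeffmap]
    exact hsym i (by omega)
  · apply hinjA
    rw [hcoeffmap, hF0, map_one]
  · intro h
    have hmap := hcoeffmap (N - 1)
    rw [h, map_zero, hFnext] at hmap
    exact hαtr (neg_eq_zero.mp hmap.symm)
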